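/- Let X : ℝ^{2n} × ℝ → ℝ^{2n} be continuously differentiable in z and suppose that for all (z,t) the matrix J·D_zX(z,t) is symmetric (equivalently, D_zX(z,t) belongs to the symplectic Lie algebra sp(2n,ℝ)). Define H(z,t) := −∫₀¹ σ( X(uz,t), z ) du, where σ(z,z') = (Jz)·z'. Then H is differentiable in z and X is the Hamiltonian vector field of H: J∇_z H(z,t) = X(z,t) for all (z,t). -/

import Mathlib

open Matrix intervalIntegral
open scoped RealInnerProductSpace

noncomputable section

/-- Phase space ℝ^{2n}, with coordinates indexed by `Fin n ⊕ Fin n` (the `x` and `p` blocks). -/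
abbrev Phase (n : ℕ) := EuclideanSpace ℝ (Fin n ⊕ Fin n)

/-- The standard symplectic matrix `J = [[0, Iₙ],[−Iₙ, 0]]`. -/
def Jmat (n : ℕ) : Matrix (Fin n ⊕ Fin n) (Fin n ⊕ Fin n) ℝ :=
  Matrix.fromBlocks 0 1 (-1) 0

/-- The linear map `z ↦ Jz` on phase space. -/
def Jv {n : ℕ} (v : Phase n) : Phase n := WithLp.toLp 2 ((Jmat n).mulVec v)

/-- The Jacobian matrix of a map of phase space at a point. -/
def jacMat {n : ℕ} (f : Phase n → Phase n) (z : Phase n) :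
    Matrix (Fin n ⊕ Fin n) (Fin n ⊕ Fin n) ℝ :=
  LinearMap.toMatrix (EuclideanSpace.basisFun _ ℝ).toBasis
    (EuclideanSpace.basisFun _ ℝ).toBasis (fderiv ℝ f z).toLinearMap

/-- The standard symplectic form `σ(z,z') = (Jz)·z'` on phase space. -/
def symplForm {n : ℕ} (z z' : Phase n) : ℝ := ⟪Jv z, z'⟫

lemma mulVec_jacMat {n : ℕ} (f : Phase n → Phase n) (z v : Phase n) :
    (jacMat f z).mulVec v = fderiv ℝ f z v := by
  have h : Matrix.toEuclideanLin (jacMat f z) = (fderiv ℝ f z).toLinearMap := by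
    rw [Matrix.toEuclideanLin_eq_toLin, jacMat, ← EuclideanSpace.basisFun_toBasis,
      Matrix.toLin_toMatrix]
  have := congrArg (fun L => L v) h
  simpa [Matrix.toEuclideanLin_apply] using congrArg WithLp.ofLp this

lemma inner_eq_dot {n : ℕ} (v w : Phase n) : ⟪v, w⟫ = v ⬝ᵥ w := by
  simp [inner, dotProduct, PiLp.inner_apply, mul_comm]

/-- The linear map `Jv` as a continuous linear map. -/
def JL (n : ℕ) : Phase n →L[ℝ] Phase n :=
  LinearMap.toContinuousLinearMap (Matrix.toEuclideanLin (Jmat n))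

lemma JL_apply {n : ℕ} (v : Phase n) : JL n v = Jv v := rfl

lemma Jmat_mul_Jmat (n : ℕ) : Jmat n * Jmat n = -1 := by
  rw [Jmat, Matrix.fromBlocks_multiply]
  simp [← Matrix.fromBlocks_one]
  rw [Matrix.fromBlocks_neg]
  simp

lemma Jv_Jv {n : ℕ} (v : Phase n) : Jv (Jv v) = -v := by
  show WithLp.toLp 2 ((Jmat n).mulVec ((Jmat n).mulVec v)) = -v
  rw [Matrix.mulVec_mulVec, Jmat_mul_Jmat, Matrix.neg_mulVec, Matrix.one_mulVec]; rfl

lemma Jv_add {n : ℕ} (v w : Phase n) : Jv (v + w) = Jv v + Jv w := by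
  show WithLp.toLp 2 ((Jmat n).mulVec (v + w)) = _
  rw [Matrix.mulVec_add]; rfl

lemma Jv_smul {n : ℕ} (c : ℝ) (v : Phase n) : Jv (c • v) = c • Jv v := by
  show WithLp.toLp 2 ((Jmat n).mulVec (c • v)) = _
  rw [Matrix.mulVec_smul]; rfl

lemma Jv_neg {n : ℕ} (v : Phase n) : Jv (-v) = -Jv v := by
  show WithLp.toLp 2 ((Jmat n).mulVec (-v)) = _
  rw [Matrix.mulVec_neg]; rfl

lemma symm_flip {n : ℕ} (f : Phase n → Phase n) (z : Phase n)
    (h : (Jmat n * jacMat f z)ᵀ = Jmat n * jacMat f z) (v w : Phase n) :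
    ⟪Jv (fderiv ℝ f z v), w⟫ = ⟪Jv (fderiv ℝ f z w), v⟫ := by
  have hv : Jv (fderiv ℝ f z v) = (Jmat n * jacMat f z).mulVec v := by
    rw [← Matrix.mulVec_mulVec, mulVec_jacMat]; rfl
  have hw : Jv (fderiv ℝ f z w) = (Jmat n * jacMat f z).mulVec w := by
    rw [← Matrix.mulVec_mulVec, mulVec_jacMat]; rfl
  rw [inner_eq_dot, inner_eq_dot, hv, hw, dotProduct_comm,
    Matrix.dotProduct_mulVec, ← Matrix.mulVec_transpose, h]

section Main
variable {n : ℕ} (F : Phase n → Phase n)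

/-- The integrand's `z`-derivative direction vector. -/
def Vvec (F : Phase n → Phase n) (u : ℝ) (z : Phase n) : Phase n :=
  Jv (F (u • z)) + u • Jv (fderiv ℝ F (u • z) z)

lemma integrand_hasFDerivAt (hF : ContDiff ℝ 1 F)
    (hsymm : ∀ z v w : Phase n, ⟪Jv (fderiv ℝ F z v), w⟫ = ⟪Jv (fderiv ℝ F z w), v⟫)
    (u : ℝ) (z : Phase n) :
    HasFDerivAt (fun w => ⟪Jv (F (u • w)), w⟫) (innerSL ℝ (Vvec F u z)) z := by
  have hFd : ∀ y, HasFDerivAt F (fderiv ℝ F y) y :=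
    fun y => (hF.differentiable one_ne_zero y).hasFDerivAt
  have h1 : HasFDerivAt (fun w : Phase n => u • w)
      (u • ContinuousLinearMap.id ℝ (Phase n)) z :=
    (u • ContinuousLinearMap.id ℝ (Phase n)).hasFDerivAt
  have h2 : HasFDerivAt (fun w => F (u • w))
      ((fderiv ℝ F (u • z)).comp (u • ContinuousLinearMap.id ℝ (Phase n))) z :=
    (hFd (u • z)).comp z h1
  have h3 : HasFDerivAt (fun w => Jv (F (u • w)))
      ((JL n).comp ((fderiv ℝ F (u • z)).comp (u • ContinuousLinearMap.id ℝ (Phase n)))) z :=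
    (JL n).hasFDerivAt.comp z h2
  have h4 := h3.inner ℝ (hasFDerivAt_id z)
  refine h4.congr_fderiv ?_
  symm
  ext w
  simp only [innerSL_apply_apply, ContinuousLinearMap.comp_apply, fderivInnerCLM_apply,
    ContinuousLinearMap.prod_apply, ContinuousLinearMap.coe_id', id_eq,
    ContinuousLinearMap.smul_apply, ContinuousLinearMap.id_apply]
  have : (fderiv ℝ F (u • z)) (u • w) = u • (fderiv ℝ F (u • z)) w := map_smul _ _ _
  rw [this, _root_.map_smul (JL n), JL_apply, inner_smul_left]
  simp only [Vvec]
  rw [inner_add_left, inner_smul_left]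
  rw [hsymm (u • z) z w, real_inner_comm]


lemma Vvec_hasDerivAt (hF : ContDiff ℝ 1 F) (z : Phase n) (u : ℝ) :
    HasDerivAt (fun v : ℝ => v • Jv (F (v • z))) (Vvec F u z) u := by
  have hFd : ∀ y, HasFDerivAt F (fderiv ℝ F y) y :=
    fun y => (hF.differentiable one_ne_zero y).hasFDerivAt
  have h1 : HasDerivAt (fun v : ℝ => v • z) z u := by
    simpa using (hasDerivAt_id u).smul_const z
  have h2 : HasDerivAt (fun v : ℝ => F (v • z)) (fderiv ℝ F (u • z) z) u :=
    (hFd (u • z)).comp_hasDerivAt u h1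
  have h3 : HasDerivAt (fun v : ℝ => JL n (F (v • z))) (JL n (fderiv ℝ F (u • z) z)) u :=
    (JL n).hasFDerivAt.comp_hasDerivAt u h2
  have h4 := (hasDerivAt_id u).smul h3
  simp only [JL_apply, one_smul, id_eq] at h4
  refine h4.congr_deriv ?_
  simp only [Vvec]
  rw [add_comm]

lemma Vvec_continuous (hF : ContDiff ℝ 1 F) :
    Continuous fun p : ℝ × Phase n => Vvec F p.1 p.2 := by
  have c1 : Continuous fun p : ℝ × Phase n => p.1 • p.2 := continuous_fst.smul continuous_snd
  have cA : Continuous fun p : ℝ × Phase n => fderiv ℝ F (p.1 • p.2) :=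
    (hF.continuous_fderiv one_ne_zero).comp c1
  have cT2 : Continuous fun p : ℝ × Phase n => fderiv ℝ F (p.1 • p.2) p.2 :=
    cA.clm_apply continuous_snd
  exact (((JL n).continuous.comp (hF.continuous.comp c1)).add
    (continuous_fst.smul ((JL n).continuous.comp cT2))).congr fun p => rfl

lemma integral_Vvec (hF : ContDiff ℝ 1 F) (z : Phase n) :
    (∫ u in (0:ℝ)..1, Vvec F u z) = Jv (F z) := by
  have hcont : Continuous fun u : ℝ => Vvec F u z :=
    (Vvec_continuous F hF).comp (continuous_id.prodMk continuous_const)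
  have := intervalIntegral.integral_eq_sub_of_hasDerivAt
    (f := fun v : ℝ => v • Jv (F (v • z)))
    (fun u _ => Vvec_hasDerivAt F hF z u)
    (hcont.intervalIntegrable 0 1)
  rw [this]
  simp

lemma main_hasFDerivAt (hF : ContDiff ℝ 1 F)
    (hsymm : ∀ z v w : Phase n, ⟪Jv (fderiv ℝ F z v), w⟫ = ⟪Jv (fderiv ℝ F z w), v⟫)
    (z₀ : Phase n) :
    HasFDerivAt (fun z => ∫ u in (0:ℝ)..1, ⟪Jv (F (u • z)), z⟫)
      (innerSL ℝ (Jv (F z₀))) z₀ := by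
  have hVcont := Vvec_continuous F hF
  obtain ⟨C, hC⟩ := ((isCompact_Icc (a := (0:ℝ)) (b := 1)).prod
    (isCompact_closedBall z₀ 1)).exists_bound_of_continuousOn hVcont.continuousOn
  have hφc : ∀ x : Phase n, Continuous fun u : ℝ => ⟪Jv (F (u • x)), x⟫ := by
    intro x
    have : Continuous fun u : ℝ => JL n (F (u • x)) :=
      (JL n).continuous.comp (hF.continuous.comp (continuous_id.smul continuous_const))
    exact this.inner (𝕜 := ℝ) continuous_const
  have hV : HasFDerivAt (fun z => ∫ u in (0:ℝ)..1, ⟪Jv (F (u • z)), z⟫)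
      (∫ u in (0:ℝ)..1, innerSL ℝ (Vvec F u z₀)) z₀ := by
    apply intervalIntegral.hasFDerivAt_integral_of_dominated_of_fderiv_le
      (F' := fun z u => innerSL ℝ (Vvec F u z)) (bound := fun _ => C) (s := Metric.ball z₀ 1) (Metric.ball_mem_nhds z₀ one_pos)
    · exact Filter.Eventually.of_forall fun x => (hφc x).aestronglyMeasurable
    · exact (hφc z₀).intervalIntegrable 0 1
    · exact ((innerSL ℝ).continuous.comp
        (hVcont.comp (continuous_id.prodMk continuous_const))).aestronglyMeasurable
    · refine Filter.Eventually.of_forall fun u hu z hz => ?_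
      rw [innerSL_apply_norm]
      refine hC (u, z) ⟨?_, Metric.ball_subset_closedBall hz⟩
      rw [Set.uIoc_of_le (zero_le_one)] at hu
      exact ⟨le_of_lt hu.1, hu.2⟩
    · exact intervalIntegrable_const
    · exact Filter.Eventually.of_forall fun u _ z _ =>
        integrand_hasFDerivAt F hF hsymm u z
  have hVint : IntervalIntegrable (fun u => Vvec F u z₀) MeasureTheory.volume 0 1 :=
    ((hVcont.comp (continuous_id.prodMk continuous_const)).intervalIntegrable 0 1)
  have heq : (∫ u in (0:ℝ)..1, innerSL ℝ (Vvec F u z₀)) = innerSL ℝ (Jv (F z₀)) := by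
    rw [(innerSL ℝ (E := Phase n)).intervalIntegral_comp_comm hVint, integral_Vvec F hF]
  rwa [heq] at hV

end Main

/-- **Reconstruction of the Hamiltonian from its vector field.** If `X(z,t)` is `C¹` in `z`
and `J·D_zX(z,t)` is symmetric for all `(z,t)` (i.e. `D_zX(z,t) ∈ sp(2n,ℝ)`), then
`H(z,t) = −∫₀¹ σ(X(uz,t), z) du` is differentiable in `z` and `X` is the Hamiltonian
vector field of `H`: `J∇_zH = X`. -/
theorem hamiltonian_vector_field_reconstruction {n : ℕ}
    (X : Phase n → ℝ → Phase n)
    (hX : ∀ t, ContDiff ℝ 1 (fun z => X z t))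
    (hsymm : ∀ (z : Phase n) (t : ℝ),
      (Jmat n * jacMat (fun w => X w t) z)ᵀ = Jmat n * jacMat (fun w => X w t) z)
    (H : Phase n → ℝ → ℝ)
    (hH : ∀ (z : Phase n) (t : ℝ),
      H z t = -∫ u in (0:ℝ)..1, symplForm (X (u • z) t) z) :
    (∀ t, Differentiable ℝ (fun z => H z t)) ∧
      ∀ (z : Phase n) (t : ℝ), Jv (gradient (fun w => H w t) z) = X z t := by
  have hsymm' : ∀ (t : ℝ) (z v w : Phase n),
      ⟪Jv (fderiv ℝ (fun w => X w t) z v), w⟫ = ⟪Jv (fderiv ℝ (fun w => X w t) z w), v⟫ :=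
    fun t z v w => symm_flip _ z (hsymm z t) v w
  have key : ∀ (z : Phase n) (t : ℝ),
      HasFDerivAt (fun w => H w t) (innerSL ℝ (-Jv (X z t))) z := by
    intro z t
    have h1 := (main_hasFDerivAt (fun w => X w t) (hX t) (hsymm' t) z).neg
    have h2 : (fun z : Phase n => H z t)
        = fun z => -(∫ u in (0:ℝ)..1, ⟪Jv (X (u • z) t), z⟫) := by
      funext w
      rw [hH w t]
      rfl
    rw [h2, map_neg]
    exact h1
  refine ⟨fun t z => (key z t).differentiableAt, fun z t => ?_⟩
  have hg : HasGradientAt (fun w => H w t) (-Jv (X z t)) z := by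
    rw [hasGradientAt_iff_hasFDerivAt]
    exact (key z t).congr_fderiv (by ext w; simp)
  rw [hg.gradient, Jv_neg, Jv_Jv, neg_neg]

end
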